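/- Let D ⊂ ℂ be open, let Ω ⊂ ℂ be a domain with D ⊂ Ω, let f : D → D be holomorphic, and let E ⊂ D be a finite nonempty set such that dist(f^n(z), ∂_∞Ω) → 0 for every z ∈ E and such that every iterate f^n is injective on E. Then the set of all functions g ∈ H(Ω) such that {g∘f^n|_E : n ∈ ℕ} is dense in C(E) (the space ℂ^E of complex-valued functions on E with the supremum norm) is a comeager subset of H(Ω). -/

import Mathlib

open Set Filter Topology Function Metric TopologicalSpace

noncomputable section

/-- The chordal metric on the Riemann sphere `ℂ_∞ = OnePoint ℂ`. -/
def chordal (x y : OnePoint ℂ) : ℝ :=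
  Option.elim x (Option.elim y 0 fun w => 2 / Real.sqrt (1 + ‖w‖ ^ 2))
    fun z => Option.elim y (2 / Real.sqrt (1 + ‖z‖ ^ 2))
      fun w => 2 * ‖z - w‖ / (Real.sqrt (1 + ‖z‖ ^ 2) * Real.sqrt (1 + ‖w‖ ^ 2))

/-- The chordal distance from a point of the Riemann sphere to a set of points. -/
def chordalDistSet (x : OnePoint ℂ) (S : Set (OnePoint ℂ)) : ℝ :=
  sInf (chordal x '' S)

/-- `M ⊆ ℂ` has no holes iff `ℂ_∞ ∖ M` is connected. -/
def NoHoles (M : Set ℂ) : Prop :=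
  IsConnected (((↑) '' M : Set (OnePoint ℂ))ᶜ)

/-- The boundary `∂_∞ Ω` of `Ω ⊆ ℂ` taken in the Riemann sphere. -/
def sphereBoundary (Ω : Set ℂ) : Set (OnePoint ℂ) :=
  frontier ((↑) '' Ω)

/-- `U_0(M)`: the nonempty open subsets of `M` having no holes. -/
def U0 (M : Set ℂ) : Set (Set ℂ) :=
  {U | U.Nonempty ∧ IsOpen U ∧ U ⊆ M ∧ NoHoles U}

/-- `K_0(M)`: the nonempty compact subsets of `M` having no holes. -/
def K0 (M : Set ℂ) : Set (Set ℂ) :=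
  {K | K.Nonempty ∧ IsCompact K ∧ K ⊆ M ∧ NoHoles K}

/-- `H(D)`: holomorphic functions on `D`, with the topology of locally uniform
convergence on `D` (induced from the compact-open topology on `C(D, ℂ)`). -/
def HolFun (D : Set ℂ) : Type := {g : ℂ → ℂ // DifferentiableOn ℂ g D}

instance (D : Set ℂ) : TopologicalSpace (HolFun D) :=
  TopologicalSpace.induced
    (fun g : HolFun D => (⟨D.restrict g.1, g.2.continuousOn.restrict⟩ : C(D, ℂ)))
    inferInstance

/-- The orbit `{g ∘ f^n |_U : n ∈ ℕ}` is dense in `H(U)`,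
i.e. `g` is `H(U)`-universal for the composition operator `C_f`. -/
def DenseOrbitIn (g f : ℂ → ℂ) (U : Set ℂ) : Prop :=
  Dense {h : HolFun U | ∃ n : ℕ, Set.EqOn h.1 (g ∘ f^[n]) U}

open OnePoint

/-! ### Auxiliary lemmas -/

lemma one_le_sqrt_aux (x : ℝ) (hx : 1 ≤ x) : 1 ≤ Real.sqrt x := by
  nlinarith [Real.sq_sqrt (by linarith : (0:ℝ) ≤ x), Real.sqrt_nonneg x]

lemma sqrt_one_add_sq_le_aux (t : ℝ) (ht : 0 ≤ t) : Real.sqrt (1 + t ^ 2) ≤ 1 + t := by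
  nlinarith [Real.sq_sqrt (by positivity : (0:ℝ) ≤ 1 + t ^ 2), Real.sqrt_nonneg (1 + t ^ 2)]

/-- The sphere boundary of a nonempty open `Ω ⊆ ℂ` is nonempty. -/
lemma sphereBoundary_nonempty (Ω : Set ℂ) (hΩ : IsOpen Ω) (hne : Ω.Nonempty) :
    (sphereBoundary Ω).Nonempty := by
  rw [Set.nonempty_iff_ne_empty]
  intro h
  have hclopen : IsClopen ((↑) '' Ω : Set (OnePoint ℂ)) :=
    isClopen_iff_frontier_eq_empty.2 h
  have huniv : ((↑) '' Ω : Set (OnePoint ℂ)) = univ :=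
    hclopen.eq_univ ⟨_, mem_image_of_mem _ hne.choose_spec⟩
  have : (∞ : OnePoint ℂ) ∈ ((↑) '' Ω : Set (OnePoint ℂ)) := huniv ▸ mem_univ _
  obtain ⟨z, _, hz⟩ := this
  exact (OnePoint.coe_ne_infty z) hz

/-- Peak functions exist at points chordally close to the boundary. -/
lemma peak_exists (Ω : Set ℂ) (hΩopen : IsOpen Ω) (hΩne : Ω.Nonempty)
    (K : Set ℂ) (hK : IsCompact K) (hKΩ : K ⊆ Ω) :
    ∃ δ : ℝ, 0 < δ ∧ ∀ w ∈ Ω, chordalDistSet (w : OnePoint ℂ) (sphereBoundary Ω) < δ →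
      ∃ φ : ℂ → ℂ, DifferentiableOn ℂ φ Ω ∧ ∀ y ∈ K, ‖φ y‖ < ‖φ w‖ := by
  obtain ⟨r, hr⟩ := hK.isBounded.subset_closedBall 0
  set R : ℝ := max r 0 with hRdef
  have hR0 : 0 ≤ R := le_max_right _ _
  have hR : ∀ y ∈ K, ‖y‖ ≤ R := by
    intro y hy
    have := hr hy
    rw [Metric.mem_closedBall, dist_zero_right] at this
    exact this.trans (le_max_left _ _)
  obtain ⟨d, hd, hdsub⟩ := hK.exists_thickening_subset_open hΩopen hKΩ
  have hdist : ∀ y ∈ K, ∀ p, p ∉ Ω → d ≤ ‖y - p‖ := by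
    intro y hy p hp
    by_contra h
    push_neg at h
    apply hp
    apply hdsub
    rw [Metric.mem_thickening_iff]
    exact ⟨y, hy, by rwa [dist_eq_norm, norm_sub_rev]⟩
  set S : ℝ := Real.sqrt (1 + R ^ 2) with hSdef
  have hS1 : 1 ≤ S := one_le_sqrt_aux _ (by nlinarith)
  have hSpos : 0 < S := by linarith
  set T : ℝ := (1 + R) * S with hTdef
  have hT0 : 0 < T := by positivity
  set δ : ℝ := min (1 / S) (d / (T + 1)) with hδdef
  have hδpos : 0 < δ := lt_min (by positivity) (by positivity)
  refine ⟨δ, hδpos, ?_⟩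
  intro w hw hchord
  have hbd := sphereBoundary_nonempty Ω hΩopen hΩne
  have hne' : (chordal (↑w) '' sphereBoundary Ω).Nonempty := hbd.image _
  obtain ⟨x, hx, hxlt⟩ : ∃ x ∈ sphereBoundary Ω, chordal (↑w) x < δ := by
    obtain ⟨a, ⟨x, hx, rfl⟩, ha⟩ := exists_lt_of_csInf_lt hne' hchord
    exact ⟨x, hx, ha⟩
  by_cases hwR : R < ‖w‖
  · exact ⟨id, differentiable_id.differentiableOn,
      fun y hy => lt_of_le_of_lt (hR y hy) hwR⟩
  push_neg at hwR
  have hsww : Real.sqrt (1 + ‖w‖ ^ 2) ≤ S :=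
    Real.sqrt_le_sqrt (by nlinarith [norm_nonneg w])
  have hsw1 : 1 ≤ Real.sqrt (1 + ‖w‖ ^ 2) := one_le_sqrt_aux _ (by nlinarith [norm_nonneg w])
  cases x with
  | infty =>
    exfalso
    have h1 : chordal (↑w) ∞ = 2 / Real.sqrt (1 + ‖w‖ ^ 2) := rfl
    rw [h1] at hxlt
    have h2 : 2 / S ≤ 2 / Real.sqrt (1 + ‖w‖ ^ 2) :=
      div_le_div_of_nonneg_left (by norm_num) (by linarith) hsww
    have h3 : (2 : ℝ) / S < 1 / S :=
      lt_of_le_of_lt h2 (lt_of_lt_of_le hxlt (min_le_left _ _))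
    have : (2 : ℝ) < 1 := by
      have := mul_lt_mul_of_pos_right h3 hSpos
      rw [div_mul_cancel₀ _ (ne_of_gt hSpos), div_mul_cancel₀ _ (ne_of_gt hSpos)] at this
      exact this
    linarith
  | coe p =>
    have hpΩ : p ∉ Ω := by
      intro hpmem
      have hopen : IsOpen ((↑) '' Ω : Set (OnePoint ℂ)) :=
        OnePoint.isOpenEmbedding_coe.isOpenMap _ hΩopen
      have hmem2 : (↑p : OnePoint ℂ) ∈ ((↑) '' Ω : Set (OnePoint ℂ)) ∩
          frontier ((↑) '' Ω : Set (OnePoint ℂ)) := ⟨mem_image_of_mem _ hpmem, hx⟩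
      rw [hopen.inter_frontier_eq] at hmem2
      exact hmem2
    have hform : chordal (↑w) (↑p) =
        2 * ‖w - p‖ / (Real.sqrt (1 + ‖w‖ ^ 2) * Real.sqrt (1 + ‖p‖ ^ 2)) := rfl
    rw [hform] at hxlt
    set a : ℝ := ‖w - p‖ with hadef
    have ha0 : 0 ≤ a := norm_nonneg _
    set sw : ℝ := Real.sqrt (1 + ‖w‖ ^ 2)
    set sp : ℝ := Real.sqrt (1 + ‖p‖ ^ 2)
    have hsp1 : 1 ≤ sp := one_le_sqrt_aux _ (by nlinarith [norm_nonneg p])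
    have hspb : sp ≤ 1 + R + a := by
      have h1 : sp ≤ 1 + ‖p‖ := sqrt_one_add_sq_le_aux _ (norm_nonneg p)
      have h2 : ‖p‖ ≤ ‖w‖ + a := by
        calc ‖p‖ = ‖w - (w - p)‖ := by ring_nf
          _ ≤ ‖w‖ + ‖w - p‖ := norm_sub_le _ _
      linarith
    have hswsp : 0 < sw * sp := by nlinarith
    have h2a : 2 * a < δ * (sw * sp) := by
      rw [div_lt_iff₀ hswsp] at hxlt
      linarith
    have hδS : δ * S ≤ 1 := by
      have : δ ≤ 1 / S := min_le_left _ _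
      calc δ * S ≤ (1 / S) * S := mul_le_mul_of_nonneg_right this hSpos.le
        _ = 1 := by field_simp
    have hδT : δ * (S * (1 + R)) < d := by
      have h1 : δ ≤ d / (T + 1) := min_le_right _ _
      have h2 : δ * T ≤ (d / (T + 1)) * T := mul_le_mul_of_nonneg_right h1 hT0.le
      have h3 : (d / (T + 1)) * T < d := by
        rw [div_mul_eq_mul_div, div_lt_iff₀ (by linarith)]
        nlinarith
      calc δ * (S * (1 + R)) = δ * T := by rw [hTdef]; ring
        _ < d := lt_of_le_of_lt h2 h3
    have hbound : sw * sp ≤ S * (1 + R + a) := by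
      have := mul_le_mul hsww hspb (by linarith) hSpos.le
      linarith
    have h2a' : 2 * a < δ * (S * (1 + R + a)) := by
      have := mul_le_mul_of_nonneg_left hbound hδpos.le
      linarith
    have hexp : δ * (S * (1 + R + a)) = δ * (S * (1 + R)) + (δ * S) * a := by ring
    have hδSa : (δ * S) * a ≤ a := by nlinarith
    have had : a < d := by
      rw [hexp] at h2a'
      linarith
    have hwp : w ≠ p := fun h => hpΩ (h ▸ hw)
    have hapos : 0 < a := by
      rw [hadef]
      exact norm_pos_iff.2 (sub_ne_zero.2 hwp)
    refine ⟨fun z => (z - p)⁻¹, ?_, ?_⟩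
    · exact DifferentiableOn.inv
        ((differentiable_id.sub_const p).differentiableOn)
        (fun z hz => sub_ne_zero.2 (fun h => hpΩ (h ▸ hz)))
    · intro y hy
      rw [norm_inv, norm_inv]
      have h1 : d ≤ ‖y - p‖ := hdist y hy p hpΩ
      have h2 : (0:ℝ) < ‖y - p‖ := lt_of_lt_of_le hd h1
      rw [inv_lt_inv₀ h2 hapos]
      exact lt_of_lt_of_le had h1

lemma diff_prod_aux {ι : Type*} (t : Finset ι) (F : ι → ℂ → ℂ)
    (h : ∀ j ∈ t, Differentiable ℂ (F j)) :
    Differentiable ℂ (fun z => ∏ j ∈ t, F j z) := by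
  classical
  induction t using Finset.induction_on with
  | empty => simpa using differentiable_const (1 : ℂ)
  | insert _ _ hj ih =>
    rename_i a s
    simp only [Finset.prod_insert hj]
    exact (h a (Finset.mem_insert_self a s)).mul
      (ih fun j hjs => h j (Finset.mem_insert_of_mem hjs))

lemma lagrange_exists {ι : Type*} [Fintype ι] (w : ι → ℂ) (hw : Function.Injective w) :
    ∃ L : ι → ℂ → ℂ, (∀ i, Differentiable ℂ (L i)) ∧ (∀ i, L i (w i) = 1) ∧
      ∀ i j, j ≠ i → L i (w j) = 0 := by
  classical
  refine ⟨fun i z => ∏ j ∈ Finset.univ.erase i, (z - w j) / (w i - w j), ?_, ?_, ?_⟩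
  · intro i
    apply diff_prod_aux
    intro j _
    simp only [div_eq_mul_inv]
    exact (differentiable_id.sub_const (w j)).mul_const _
  · intro i
    apply Finset.prod_eq_one
    intro j hj
    have hji : j ≠ i := Finset.ne_of_mem_erase hj
    exact div_self (sub_ne_zero.2 fun h => hji (hw h).symm)
  · intro i j hji
    apply Finset.prod_eq_zero (Finset.mem_erase.2 ⟨hji, Finset.mem_univ j⟩)
    simp

/-- Interpolation with small error on a compact set, given peak functions. -/
lemma interp_exists {ι : Type*} [Fintype ι] (Ω K : Set ℂ) (hK : IsCompact K) (hKΩ : K ⊆ Ω)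
    (g₀ : ℂ → ℂ) (hg₀ : DifferentiableOn ℂ g₀ Ω) (ε : ℝ) (hε : 0 < ε)
    (w : ι → ℂ) (hw : Function.Injective w)
    (hpeak : ∀ i, ∃ φ : ℂ → ℂ, DifferentiableOn ℂ φ Ω ∧ ∀ y ∈ K, ‖φ y‖ < ‖φ (w i)‖)
    (c : ι → ℂ) :
    ∃ h : ℂ → ℂ, DifferentiableOn ℂ h Ω ∧ (∀ y ∈ K, ‖h y - g₀ y‖ < ε) ∧
      ∀ i, h (w i) = c i := by
  classical
  obtain ⟨L, hLd, hL1, hL0⟩ := lagrange_exists w hw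
  set n : ℝ := (Fintype.card ι : ℝ) with hndef
  have hn0 : 0 ≤ n := by positivity
  set ε' : ℝ := ε / (2 * (n + 1)) with hε'def
  have hε' : 0 < ε' := by positivity
  have key : ∀ i, ∃ ψ : ℂ → ℂ, DifferentiableOn ℂ ψ Ω ∧ ψ (w i) = 1 ∧
      (∀ j, j ≠ i → ψ (w j) = 0) ∧ ∀ y ∈ K, ‖(c i - g₀ (w i)) * ψ y‖ ≤ ε' := by
    intro i
    rcases K.eq_empty_or_nonempty with hKe | hKne
    · exact ⟨L i, (hLd i).differentiableOn, hL1 i, fun j hj => hL0 i j hj,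
        by simp [hKe]⟩
    obtain ⟨φ, hφd, hφlt⟩ := hpeak i
    obtain ⟨y₀, hy₀K, hy₀max⟩ := hK.exists_isMaxOn hKne
      ((hφd.continuousOn.mono hKΩ).norm)
    set M : ℝ := ‖φ y₀‖ with hMdef
    have hM : M < ‖φ (w i)‖ := hφlt y₀ hy₀K
    have hφwpos : 0 < ‖φ (w i)‖ := lt_of_le_of_lt (norm_nonneg _) hM
    have hφwne : φ (w i) ≠ 0 := norm_pos_iff.1 hφwpos
    set r : ℝ := M / ‖φ (w i)‖ with hrdef
    have hr0 : 0 ≤ r := div_nonneg (norm_nonneg _) (norm_nonneg _)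
    have hr1 : r < 1 := (div_lt_one hφwpos).2 hM
    obtain ⟨C, hC⟩ := hK.exists_bound_of_continuousOn
      ((continuous_const.mul (hLd i).continuous).continuousOn
        (s := K) : ContinuousOn (fun y => (c i - g₀ (w i)) * L i y) K)
    set B : ℝ := max C 1 with hBdef
    have hB1 : 1 ≤ B := le_max_right _ _
    have hBpos : 0 < B := lt_of_lt_of_le one_pos hB1
    have htend : Tendsto (fun m : ℕ => r ^ m) atTop (𝓝 0) :=
      tendsto_pow_atTop_nhds_zero_of_lt_one hr0 hr1
    obtain ⟨m, hm⟩ := (htend.eventually_lt_const (show (0:ℝ) < ε' / B by positivity)).exists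
    refine ⟨fun z => L i z * (φ z / φ (w i)) ^ m, ?_, ?_, ?_, ?_⟩
    · exact DifferentiableOn.mul ((hLd i).differentiableOn)
        ((hφd.div_const _).pow m)
    · show L i (w i) * (φ (w i) / φ (w i)) ^ m = 1
      rw [hL1 i, div_self hφwne, one_pow, one_mul]
    · intro j hj
      show L i (w j) * (φ (w j) / φ (w i)) ^ m = 0
      rw [hL0 i j hj, zero_mul]
    · intro y hy
      have h1 : ‖(c i - g₀ (w i)) * (L i y * (φ y / φ (w i)) ^ m)‖
          = ‖(c i - g₀ (w i)) * L i y‖ * ‖φ y / φ (w i)‖ ^ m := by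
        rw [← mul_assoc, norm_mul, norm_pow]
      rw [h1]
      have h2 : ‖φ y / φ (w i)‖ ≤ r := by
        rw [norm_div, hrdef]
        gcongr
        exact hy₀max hy
      calc ‖(c i - g₀ (w i)) * L i y‖ * ‖φ y / φ (w i)‖ ^ m
          ≤ B * r ^ m :=
            mul_le_mul ((hC y hy).trans (le_max_left _ _))
              (pow_le_pow_left₀ (norm_nonneg _) h2 m)
              (pow_nonneg (norm_nonneg _) m) hBpos.le
        _ ≤ B * (ε' / B) := mul_le_mul_of_nonneg_left hm.le hBpos.le
        _ = ε' := by field_simp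
  choose ψ hψd hψ1 hψ0 hψb using key
  refine ⟨fun z => g₀ z + ∑ i, (c i - g₀ (w i)) * ψ i z, ?_, ?_, ?_⟩
  · exact hg₀.add (DifferentiableOn.fun_sum fun i _ =>
      (differentiableOn_const _).mul (hψd i))
  · intro y hy
    have h1 : (g₀ y + ∑ i, (c i - g₀ (w i)) * ψ i y) - g₀ y
        = ∑ i, (c i - g₀ (w i)) * ψ i y := by ring
    rw [h1]
    calc ‖∑ i, (c i - g₀ (w i)) * ψ i y‖
        ≤ ∑ i, ‖(c i - g₀ (w i)) * ψ i y‖ := norm_sum_le _ _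
      _ ≤ ∑ _i : ι, ε' := Finset.sum_le_sum fun i _ => hψb i y hy
      _ = n * ε' := by rw [Finset.sum_const, Finset.card_univ]; simp [hndef]
      _ < ε := by
          have h2 : n * ε' < (2 * (n + 1)) * ε' :=
            mul_lt_mul_of_pos_right (by linarith) hε'
          have h3 : (2 * (n + 1)) * ε' = ε := by
            rw [hε'def]; field_simp
          linarith
  · intro j
    show g₀ (w j) + ∑ i, (c i - g₀ (w i)) * ψ i (w j) = c j
    have h1 : ∑ i, (c i - g₀ (w i)) * ψ i (w j) = (c j - g₀ (w j)) * ψ j (w j) := by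
      apply Finset.sum_eq_single
      · intro i _ hij
        rw [hψ0 i j (by exact fun h => hij (h ▸ rfl) : j ≠ i), mul_zero]
      · intro h
        exact absurd (Finset.mem_univ j) h
    rw [h1, hψ1 j, mul_one]
    ring

/-- If `E ⊆ D` is finite and nonempty, `dist(f^n(z), ∂_∞Ω) → 0` for every `z ∈ E`,
and every iterate `f^n` is injective on `E`, then the set of `g ∈ H(Ω)` such that
`{g∘f^n|_E : n ∈ ℕ}` is dense in `C(E)` is comeager in `H(Ω)`. -/
theorem universality_comeager_finite_set
    (D Ω : Set ℂ) (hD : IsOpen D) (hΩopen : IsOpen Ω) (hΩconn : IsConnected Ω)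
    (hDΩ : D ⊆ Ω)
    (f : ℂ → ℂ) (hf : DifferentiableOn ℂ f D) (hfD : MapsTo f D D)
    (E : Set ℂ) (hED : E ⊆ D) (hEfin : E.Finite) (hEne : E.Nonempty)
    (hrun : ∀ z ∈ E, Tendsto
      (fun n : ℕ => chordalDistSet ((f^[n] z : ℂ) : OnePoint ℂ) (sphereBoundary Ω))
      atTop (𝓝 0))
    (hinj : ∀ n : ℕ, Set.InjOn (f^[n]) E) :
    {g : HolFun Ω |
        Dense {h : ↥E → ℂ | ∃ n : ℕ, ∀ z : ↥E, h z = g.1 (f^[n] (z : ℂ))}}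
      ∈ residual (HolFun Ω) := by
  classical
  haveI : Finite ↥E := hEfin.to_subtype
  haveI : Fintype ↥E := hEfin.fintype
  -- iterates stay in `D ⊆ Ω`
  have hmem : ∀ (nn : ℕ) (z : ↥E), f^[nn] (z : ℂ) ∈ D :=
    fun nn z => hfD.iterate nn (hED z.2)
  -- countable dense set of target functions
  obtain ⟨Q, hQc, hQd⟩ := TopologicalSpace.exists_countable_dense (↥E → ℂ)
  -- the basic open dense sets
  set U : (↥E → ℂ) → ℕ → Set (HolFun Ω) := fun q k =>
    {g : HolFun Ω | ∃ n : ℕ, ∀ z : ↥E,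
      dist (g.1 (f^[n] (z : ℂ))) (q z) < 1 / (k + 1)} with hUdef
  -- openness
  have hUopen : ∀ q k, IsOpen (U q k) := by
    intro q k
    have hrw : U q k = ⋃ n : ℕ, ⋂ z : ↥E,
        {g : HolFun Ω | g.1 (f^[n] (z : ℂ)) ∈ Metric.ball (q z) (1 / (k + 1))} := by
      ext g
      simp only [hUdef, mem_setOf_eq, mem_iUnion, mem_iInter, Metric.mem_ball]
    rw [hrw]
    refine isOpen_iUnion fun n => isOpen_iInter_of_finite fun z => ?_
    have hcont : Continuous fun g : HolFun Ω => g.1 (f^[n] (z : ℂ)) := by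
      have h1 : Continuous fun g : HolFun Ω =>
          (⟨Ω.restrict g.1, g.2.continuousOn.restrict⟩ : C(↥Ω, ℂ)) := continuous_induced_dom
      exact (continuous_eval_const
        (⟨f^[n] (z : ℂ), hDΩ (hmem n z)⟩ : ↥Ω)).comp h1
    exact Metric.isOpen_ball.preimage hcont
  -- density
  have hUdense : ∀ q k, Dense (U q k) := by
    intro q k g₀
    rw [mem_closure_iff_nhds]
    intro t ht
    set ι : HolFun Ω → C(↥Ω, ℂ) :=
      fun g => (⟨Ω.restrict g.1, g.2.continuousOn.restrict⟩ : C(↥Ω, ℂ)) with hιdef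
    have ht' : t ∈ comap ι (𝓝 (ι g₀)) := by
      rw [← nhds_induced ι g₀]; exact ht
    obtain ⟨V, hV, hVsub⟩ := mem_comap.1 ht'
    have hb := nhds_basis_uniformity' (α := C(↥Ω, ℂ))
      ContinuousMap.hasBasis_compactConvergenceUniformity (x := ι g₀)
    obtain ⟨⟨Ks, W⟩, ⟨hKs, hW⟩, hKW⟩ := hb.mem_iff.1 hV
    obtain ⟨ε, hε, hεW⟩ := Metric.mem_uniformity_dist.1 hW
    -- the compact set in `ℂ`
    set K' : Set ℂ := Subtype.val '' Ks with hK'def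
    have hK'cpt : IsCompact K' := hKs.image continuous_subtype_val
    have hK'Ω : K' ⊆ Ω := by
      rintro y ⟨x, hx, rfl⟩
      exact x.2
    -- peak functions
    obtain ⟨δ, hδ, hpk⟩ := peak_exists Ω hΩopen hΩconn.nonempty K' hK'cpt hK'Ω
    -- find a good iterate
    have hev : ∀ᶠ nn in atTop, ∀ z ∈ E,
        chordalDistSet ((f^[nn] z : ℂ) : OnePoint ℂ) (sphereBoundary Ω) < δ :=
      (eventually_all_finite hEfin).2 fun z hz => (hrun z hz).eventually_lt_const hδ
    obtain ⟨n, hn⟩ := hev.exists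
    -- interpolation data
    set w : ↥E → ℂ := fun z => f^[n] (z : ℂ) with hwdef
    have hwinj : Function.Injective w := fun a b hab => Subtype.ext (hinj n a.2 b.2 hab)
    have hwΩ : ∀ z, w z ∈ Ω := fun z => hDΩ (hmem n z)
    have hpeak : ∀ z : ↥E, ∃ φ : ℂ → ℂ, DifferentiableOn ℂ φ Ω ∧
        ∀ y ∈ K', ‖φ y‖ < ‖φ (w z)‖ :=
      fun z => hpk (w z) (hwΩ z) (hn (z : ℂ) z.2)
    obtain ⟨h, hhd, hhK, hhw⟩ := interp_exists Ω K' hK'cpt hK'Ω g₀.1 g₀.2 ε hε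
      w hwinj hpeak (fun z => q z)
    refine ⟨⟨h, hhd⟩, ?_, ?_⟩
    · -- membership in `t`
      apply hVsub
      apply Set.mem_preimage.2
      apply hKW
      intro x hx
      apply hεW
      have := hhK (x : ℂ) ⟨x, hx, rfl⟩
      rw [dist_eq_norm, norm_sub_rev]
      exact this
    · -- membership in `U q k`
      refine ⟨n, fun z => ?_⟩
      show dist (h (f^[n] (z : ℂ))) (q z) < 1 / (k + 1)
      rw [show h (f^[n] (z : ℂ)) = q z from hhw z, dist_self]
      positivity
  -- the residual set
  have hres : (⋂ q ∈ Q, ⋂ k : ℕ, U q k) ∈ residual (HolFun Ω) :=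
    (countable_bInter_mem hQc).2 fun q _ => countable_iInter_mem.2 fun k =>
      residual_of_dense_open (hUopen q k) (hUdense q k)
  refine Filter.mem_of_superset hres ?_
  intro g hg
  simp only [mem_iInter] at hg
  show Dense {h : ↥E → ℂ | ∃ n : ℕ, ∀ z : ↥E, h z = g.1 (f^[n] (z : ℂ))}
  set Sg : Set (↥E → ℂ) :=
    {h : ↥E → ℂ | ∃ n : ℕ, ∀ z : ↥E, h z = g.1 (f^[n] (z : ℂ))} with hSgdef
  have hQS : Q ⊆ closure Sg := by
    intro q hq
    choose nn hnn using fun k : ℕ => (hg q hq k : ∃ n : ℕ, ∀ z : ↥E,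
      dist (g.1 (f^[n] (z : ℂ))) (q z) < 1 / (k + 1))
    have htend : Tendsto (fun k : ℕ => (fun z : ↥E => g.1 (f^[nn k] (z : ℂ))))
        atTop (𝓝 q) := by
      rw [tendsto_pi_nhds]
      intro z
      apply tendsto_iff_dist_tendsto_zero.2
      apply squeeze_zero (fun k => dist_nonneg) (fun k => (hnn k z).le)
      exact tendsto_one_div_add_atTop_nhds_zero_nat
    exact mem_closure_of_tendsto htend
      (Filter.Eventually.of_forall fun k => ⟨nn k, fun z => rfl⟩)
  exact (hQd.mono hQS).of_closure
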